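/- Let k ≥ 1 be an integer, a > 0 with a + k/2 > 1 when k = 1 and any a > 0 when k ≥ 2, b > 0, and n, p, q with a + (n−p)/2 − q/2 > 1/2 and a + n/2 − p/2 − q/2 + k/2 > 1. Then the double integral ∫_0^∞ ∫_0^∞ exp(−τ/b) exp(−s/b) s^{k/2 + a − 1} τ^{a + n/2 − p/2 − q/2 − 2} (1 + (s/τ)^k)^{−1/2} dτ ds is finite. -/

import Mathlib

open MeasureTheory Set
open scoped ENNReal

/-- Gamma-type lintegral finiteness. -/
lemma rsr_gamma_finite {b r : ℝ} (hb : 0 < b) (hr : -1 < r) :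
    (∫⁻ x in Ioi (0 : ℝ), ENNReal.ofReal (Real.exp (-x / b) * x ^ r)) < ⊤ := by
  have hI : IntegrableOn (fun x : ℝ => x ^ r * Real.exp (-(1 / b) * x ^ (1 : ℝ))) (Ioi 0) :=
    integrableOn_rpow_mul_exp_neg_mul_rpow hr zero_lt_one (by positivity)
  have h := hI.setLIntegral_lt_top
  refine lt_of_eq_of_lt ?_ h
  refine lintegral_congr fun x => ?_
  congr 1
  rw [Real.rpow_one, mul_comm]
  congr 1
  ring

/-- The key integrability estimate underlying the existence of the posterior
mean and variance in Restricted Spatial Regression models. -/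
theorem rsr_double_integral_finite (k : ℕ) (hk : 1 ≤ k)
    (a b : ℝ) (ha : 0 < a) (hb : 0 < b) (n p q : ℕ)
    (hk1 : k = 1 → 1 < a + (k : ℝ) / 2)
    (h1 : 1 / 2 < a + ((n : ℝ) - (p : ℝ)) / 2 - (q : ℝ) / 2)
    (h2 : 1 < a + (n : ℝ) / 2 - (p : ℝ) / 2 - (q : ℝ) / 2 + (k : ℝ) / 2) :
    (∫⁻ s in Ioi (0 : ℝ), ∫⁻ τ in Ioi (0 : ℝ),
      ENNReal.ofReal (Real.exp (-τ / b) * Real.exp (-s / b) *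
        s ^ ((k : ℝ) / 2 + a - 1) *
        τ ^ (a + (n : ℝ) / 2 - (p : ℝ) / 2 - (q : ℝ) / 2 - 2) *
        (1 + (s / τ) ^ k) ^ (-(1 : ℝ) / 2))) < ⊤ := by
  set β : ℝ := a + (n : ℝ) / 2 - (p : ℝ) / 2 - (q : ℝ) / 2 - 2 with hβ
  set θ : ℝ := β + (k : ℝ) / 2 with hθ
  have hθ1 : -1 < θ := by
    simp only [hθ, hβ]; linarith
  have ha1 : -1 < a - 1 := by linarith
  set B : ℝ≥0∞ := ∫⁻ τ in Ioi (0 : ℝ), ENNReal.ofReal (Real.exp (-τ / b) * τ ^ θ) with hB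
  have hBt : B < ⊤ := rsr_gamma_finite hb hθ1
  have hAt : (∫⁻ s in Ioi (0 : ℝ),
      ENNReal.ofReal (Real.exp (-s / b) * s ^ (a - 1))) < ⊤ := rsr_gamma_finite hb ha1
  -- pointwise real bound
  have key : ∀ s ∈ Ioi (0 : ℝ), ∀ τ ∈ Ioi (0 : ℝ),
      Real.exp (-τ / b) * Real.exp (-s / b) * s ^ ((k : ℝ) / 2 + a - 1) * τ ^ β *
        (1 + (s / τ) ^ k) ^ (-(1 : ℝ) / 2)
      ≤ (Real.exp (-s / b) * s ^ (a - 1)) * (Real.exp (-τ / b) * τ ^ θ) := by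
    intro s hs τ hτ
    rw [mem_Ioi] at hs hτ
    have hst : (0 : ℝ) < s / τ := div_pos hs hτ
    have hX : (1 + (s / τ) ^ k) ^ (-(1 : ℝ) / 2) ≤ s ^ (-(k : ℝ) / 2) * τ ^ ((k : ℝ) / 2) := by
      have h0 : (0 : ℝ) < (s / τ) ^ k := pow_pos hst k
      have hle : ((s / τ) ^ k : ℝ) ≤ 1 + (s / τ) ^ k := by linarith
      have h1' : (1 + (s / τ) ^ k) ^ (-(1 : ℝ) / 2) ≤ ((s / τ) ^ k) ^ (-(1 : ℝ) / 2) :=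
        Real.rpow_le_rpow_of_nonpos h0 hle (by norm_num)
      refine h1'.trans_eq ?_
      rw [← Real.rpow_natCast (s / τ) k, ← Real.rpow_mul hst.le,
        Real.div_rpow hs.le hτ.le,
        show (k : ℝ) * (-(1 : ℝ) / 2) = -((k : ℝ) / 2) by ring,
        Real.rpow_neg hτ.le, div_inv_eq_mul, neg_div]
    have hpos : 0 ≤ Real.exp (-τ / b) * Real.exp (-s / b) * s ^ ((k : ℝ) / 2 + a - 1) * τ ^ β :=
      by positivity
    calc Real.exp (-τ / b) * Real.exp (-s / b) * s ^ ((k : ℝ) / 2 + a - 1) * τ ^ β *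
          (1 + (s / τ) ^ k) ^ (-(1 : ℝ) / 2)
        ≤ Real.exp (-τ / b) * Real.exp (-s / b) * s ^ ((k : ℝ) / 2 + a - 1) * τ ^ β *
          (s ^ (-(k : ℝ) / 2) * τ ^ ((k : ℝ) / 2)) := by
          exact mul_le_mul_of_nonneg_left hX hpos
      _ = (Real.exp (-s / b) * (s ^ ((k : ℝ) / 2 + a - 1) * s ^ (-(k : ℝ) / 2))) *
          (Real.exp (-τ / b) * (τ ^ β * τ ^ ((k : ℝ) / 2))) := by ring
      _ = (Real.exp (-s / b) * s ^ (a - 1)) * (Real.exp (-τ / b) * τ ^ θ) := by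
          rw [← Real.rpow_add hs, ← Real.rpow_add hτ,
            show (k : ℝ) / 2 + a - 1 + -(k : ℝ) / 2 = a - 1 by ring, hθ]
  calc (∫⁻ s in Ioi (0 : ℝ), ∫⁻ τ in Ioi (0 : ℝ),
      ENNReal.ofReal (Real.exp (-τ / b) * Real.exp (-s / b) *
        s ^ ((k : ℝ) / 2 + a - 1) * τ ^ β *
        (1 + (s / τ) ^ k) ^ (-(1 : ℝ) / 2)))
      ≤ ∫⁻ s in Ioi (0 : ℝ), ENNReal.ofReal (Real.exp (-s / b) * s ^ (a - 1)) * B := by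
        refine lintegral_mono_ae ((ae_restrict_iff' measurableSet_Ioi).2 (ae_of_all _
          fun s hs => ?_))
        calc (∫⁻ τ in Ioi (0 : ℝ),
            ENNReal.ofReal (Real.exp (-τ / b) * Real.exp (-s / b) *
              s ^ ((k : ℝ) / 2 + a - 1) * τ ^ β * (1 + (s / τ) ^ k) ^ (-(1 : ℝ) / 2)))
            ≤ ∫⁻ τ in Ioi (0 : ℝ), ENNReal.ofReal (Real.exp (-s / b) * s ^ (a - 1)) *
              ENNReal.ofReal (Real.exp (-τ / b) * τ ^ θ) := by
              refine lintegral_mono_ae ((ae_restrict_iff' measurableSet_Ioi).2 (ae_of_all _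
                fun τ hτ => ?_))
              rw [← ENNReal.ofReal_mul (mul_nonneg (Real.exp_nonneg _)
                (Real.rpow_nonneg (le_of_lt (mem_Ioi.mp hs)) _))]
              exact ENNReal.ofReal_le_ofReal (key s hs τ hτ)
          _ = ENNReal.ofReal (Real.exp (-s / b) * s ^ (a - 1)) * B :=
              lintegral_const_mul' _ _ ENNReal.ofReal_ne_top
    _ = (∫⁻ s in Ioi (0 : ℝ), ENNReal.ofReal (Real.exp (-s / b) * s ^ (a - 1))) * B :=
        lintegral_mul_const' _ _ hBt.ne
    _ < ⊤ := ENNReal.mul_lt_top hAt hBt
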